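/- arXiv:2407.20479 — 2 statements merged into one kernel-verified Lean document; each statement's English description precedes it below -/
import Mathlib

section
/- Intersection distributes over lookaround-sandwiched regexes: for all regexes A₁, A₂, B₁, B₂, E₁, E₂, the regex ((?<=B₁)·E₁·(?=A₁)) & ((?<=B₂)·E₂·(?=A₂)) is semantically equivalent to (?<=B₁)·(?<=B₂)·(E₁&E₂)·(?=A₁)·(?=A₂). -/
/-- Extended regular expressions: predicates, epsilon, anchors, union,
intersection, concatenation, bounded repetition, star, complement, lookarounds. -/
inductive Regex (α : Type) where
  | pred : (α → Bool) → Regex α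
  | eps : Regex α
  | bos : Regex α          -- start anchor \A
  | eos : Regex α          -- end anchor \z
  | union : Regex α → Regex α → Regex α
  | inter : Regex α → Regex α → Regex α
  | cat : Regex α → Regex α → Regex α
  | repn : Regex α → ℕ → Regex α
  | star : Regex α → Regex α
  | compl : Regex α → Regex α
  | la : Regex α → Regex α    -- lookahead (?=R)
  | nla : Regex α → Regex α   -- negative lookahead (?!R)
  | lb : Regex α → Regex α    -- lookbehind (?<=R)
  | nlb : Regex α → Regex α   -- negative lookbehind (?<!R)

/-- m-fold concatenation of a binary span relation. -/
def powMatches (M : ℕ → ℕ → Prop) : ℕ → ℕ → ℕ → Prop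
  | 0, i, j => i = j
  | m+1, i, j => ∃ k, i ≤ k ∧ k ≤ j ∧ M i k ∧ powMatches M m k j

/-- Span-based match semantics: `Matches w R i j` means the span (i,j) of w matches R. -/
def Matches {α : Type} (w : List α) : Regex α → ℕ → ℕ → Prop
  | .pred ψ, i, j => j = i + 1 ∧ ∃ c, w[i]? = some c ∧ ψ c = true
  | .eps, i, j => i = j
  | .bos, i, j => i = j ∧ i = 0
  | .eos, i, j => i = j ∧ j = w.length
  | .union L R, i, j => Matches w L i j ∨ Matches w R i j
  | .inter L R, i, j => Matches w L i j ∧ Matches w R i j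
  | .cat L R, i, j => ∃ k, i ≤ k ∧ k ≤ j ∧ Matches w L i k ∧ Matches w R k j
  | .repn R m, i, j => powMatches (Matches w R) m i j
  | .star R, i, j => ∃ m, powMatches (Matches w R) m i j
  | .compl R, i, j => ¬ Matches w R i j
  | .la R, i, j => i = j ∧ ∃ k, j ≤ k ∧ Matches w R j k
  | .nla R, i, j => i = j ∧ ¬ ∃ k, j ≤ k ∧ Matches w R j k
  | .lb R, i, j => i = j ∧ ∃ k, k ≤ i ∧ Matches w R k i
  | .nlb R, i, j => i = j ∧ ¬ ∃ k, k ≤ i ∧ Matches w R k i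

/-- ((?<=B₁)·E₁·(?=A₁)) & ((?<=B₂)·E₂·(?=A₂)) ≡ (?<=B₁)·(?<=B₂)·(E₁&E₂)·(?=A₁)·(?=A₂) -/
theorem inter_lookaround_sandwich {α : Type} (A₁ A₂ B₁ B₂ E₁ E₂ : Regex α)
    (w : List α) (i j : ℕ) :
    Matches w (.inter (.cat (.lb B₁) (.cat E₁ (.la A₁)))
                      (.cat (.lb B₂) (.cat E₂ (.la A₂)))) i j ↔
      Matches w (.cat (.lb B₁) (.cat (.lb B₂)
                  (.cat (.inter E₁ E₂) (.cat (.la A₁) (.la A₂))))) i j := by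
  simp only [Matches]
  constructor
  · rintro ⟨⟨k1, _, _, ⟨rfl, hb1⟩, m1, h1, h2, he1, rfl, ha1⟩,
           k2, _, _, ⟨rfl, hb2⟩, m2, h3, h4, he2, rfl, ha2⟩
    exact ⟨i, le_refl i, by omega, ⟨rfl, hb1⟩, i, le_refl i, by omega, ⟨rfl, hb2⟩,
           m2, by omega, le_refl _, ⟨he1, he2⟩, m2, le_refl _, le_refl _,
           ⟨rfl, ha1⟩, rfl, ha2⟩
  · rintro ⟨k1, _, _, ⟨rfl, hb1⟩, k2, _, _, ⟨rfl, hb2⟩,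
           m, hm1, hm2, ⟨he1, he2⟩, k3, h5, h6, ⟨rfl, ha1⟩, rfl, ha2⟩
    exact ⟨⟨i, le_refl i, hm1, ⟨rfl, hb1⟩, m, hm1, le_refl _, he1, rfl, ha1⟩,
           i, le_refl i, hm1, ⟨rfl, hb2⟩, m, hm1, le_refl _, he2, rfl, ha2⟩
end

section
/- Soundness of the loop-merging rewrite: for every regex R and bounds l ≤ k ≤ m ≤ n (with m possibly infinite), the union R{l,m} | R{k,n} is semantically equivalent to R{l,max(m,n)}, where R{a,b} denotes between a and b concatenated copies of R. -/
/-- `LoopMatches w R l b i j`: (i,j) matches R{l,b}, i.e., between l and b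
(b possibly ∞) concatenated copies of R. -/
def LoopMatches {α : Type} (w : List α) (R : Regex α) (l : ℕ) (b : ℕ∞) (i j : ℕ) : Prop :=
  ∃ c : ℕ, l ≤ c ∧ (c : ℕ∞) ≤ b ∧ powMatches (Matches w R) c i j

/-- Loop merging: if l ≤ k ≤ m then R{l,m} | R{k,n} ≡ R{l,max(m,n)}. -/
theorem loop_merge {α : Type} (w : List α) (R : Regex α) (l k : ℕ) (m n : ℕ∞)
    (hlk : l ≤ k) (hkm : (k : ℕ∞) ≤ m) (i j : ℕ) :
    (LoopMatches w R l m i j ∨ LoopMatches w R k n i j) ↔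
      LoopMatches w R l (max m n) i j := by
  constructor
  · rintro (⟨c, hlc, hcm, hp⟩ | ⟨c, hkc, hcn, hp⟩)
    · exact ⟨c, hlc, hcm.trans (le_max_left _ _), hp⟩
    · exact ⟨c, hlk.trans hkc, hcn.trans (le_max_right _ _), hp⟩
  · rintro ⟨c, hlc, hc, hp⟩
    by_cases hcm : (c : ℕ∞) ≤ m
    · exact Or.inl ⟨c, hlc, hcm, hp⟩
    · have hcn : (c : ℕ∞) ≤ n := by
        rcases max_cases m n with ⟨h1, _⟩ | ⟨h1, _⟩
        · exact absurd (h1 ▸ hc) hcm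
        · exact h1 ▸ hc
      have hkc : k ≤ c := by
        have : (k : ℕ∞) ≤ (c : ℕ∞) := hkm.trans (le_of_not_ge hcm)
        exact_mod_cast this
      exact Or.inr ⟨c, hkc, hcn, hp⟩
end
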